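/- For every ε > 0 there exists a sequence (Δₙ) of Delzant polygons such that λ(Δₙ Δ [0,1]²) ≤ ε for every n, the sequence is Cauchy for d, and no subsequence of (Δₙ) converges in d to a Delzant polygon: there is no strictly increasing sequence (n_k) and no Delzant polygon Δ with λ(Δ_{n_k} Δ Δ) → 0. (The space of Delzant polygons with the metric d is not locally compact.) -/

import Mathlib

open MeasureTheory Set Metric Filter

noncomputable section

abbrev Plane := EuclideanSpace ℝ (Fin 2)

/-- The real vector in the plane determined by an integer vector. -/
def vec (u : Fin 2 → ℤ) : Plane := WithLp.toLp 2 (fun i => (u i : ℝ))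

/-- A Delzant polygon: compact, convex, of positive Lebesgue measure, and at every
extreme point the polygon locally coincides with a cone spanned by a `ℤ`-basis of `ℤ²`. -/
def IsDelzant (Δ : Set Plane) : Prop :=
  IsCompact Δ ∧ Convex ℝ Δ ∧ 0 < volume Δ ∧
  ∀ v ∈ Δ.extremePoints ℝ, ∃ u₁ u₂ : Fin 2 → ℤ,
    LinearIndependent ℝ ![vec u₁, vec u₂] ∧
    (u₁ 0 * u₂ 1 - u₁ 1 * u₂ 0 = 1 ∨ u₁ 0 * u₂ 1 - u₁ 1 * u₂ 0 = -1) ∧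
    ∃ ε > (0:ℝ), Δ ∩ closedBall v ε =
      {x : Plane | ∃ t₁ t₂ : ℝ, 0 ≤ t₁ ∧ 0 ≤ t₂ ∧ x = v + t₁ • vec u₁ + t₂ • vec u₂}
        ∩ closedBall v ε

/-- The closed unit square $[0,1]^2$ in the plane. -/
def unitSquare : Set Plane :=
  {x : Plane | 0 ≤ x 0 ∧ x 0 ≤ 1 ∧ 0 ≤ x 1 ∧ x 1 ≤ 1}

lemma volume_strip_le (a g1 g2 : ℝ) :
    volume {x : Plane | x 0 ∈ Icc 0 a ∧ x 0 + x 1 ∈ Icc g1 g2}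
      ≤ ENNReal.ofReal a * ENNReal.ofReal (g2 - g1) := by
  have e1 := EuclideanSpace.volume_preserving_symm_measurableEquiv_toLp (Fin 2)
  have e2 := MeasureTheory.volume_preserving_finTwoArrow ℝ
  set S' : Set (ℝ × ℝ) := {p : ℝ × ℝ | p.1 ∈ Icc 0 a ∧ p.1 + p.2 ∈ Icc g1 g2} with hS'
  have hmeas : MeasurableSet S' := by
    apply MeasurableSet.inter
    · exact measurable_fst measurableSet_Icc
    · exact (measurable_fst.add measurable_snd) measurableSet_Icc
  have hpre : {x : Plane | x 0 ∈ Icc 0 a ∧ x 0 + x 1 ∈ Icc g1 g2}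
      = ((MeasurableEquiv.finTwoArrow : (Fin 2 → ℝ) ≃ᵐ ℝ × ℝ) ∘ (MeasurableEquiv.toLp 2 (Fin 2 → ℝ)).symm) ⁻¹' S' := by
    ext x; simp [S', MeasurableEquiv.finTwoArrow]
  rw [hpre, (e2.comp e1).measure_preimage hmeas.nullMeasurableSet]
  rw [show (volume : Measure (ℝ × ℝ)) = (volume : Measure ℝ).prod volume from rfl,
    Measure.prod_apply hmeas]
  have hle : ∀ x : ℝ, volume (Prod.mk x ⁻¹' S') ≤ (Icc 0 a).indicator (fun _ => ENNReal.ofReal (g2 - g1)) x := by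
    intro x
    by_cases hx : x ∈ Icc (0:ℝ) a
    · rw [indicator_of_mem hx]
      have hsub : Prod.mk x ⁻¹' S' ⊆ Icc (g1 - x) (g2 - x) := by
        intro y hy
        simp only [S', mem_preimage, mem_setOf_eq, mem_Icc] at hy ⊢
        constructor <;> linarith [hy.2.1, hy.2.2]
      calc volume (Prod.mk x ⁻¹' S') ≤ volume (Icc (g1 - x) (g2 - x)) := measure_mono hsub
        _ = ENNReal.ofReal (g2 - g1) := by rw [Real.volume_Icc]; congr 1; ring
    · have hempty : Prod.mk x ⁻¹' S' = ∅ := by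
        rw [eq_empty_iff_forall_notMem]; intro y hy; exact hx hy.1
      simp [hempty, indicator_of_notMem hx]
  calc ∫⁻ x, volume (Prod.mk x ⁻¹' S') ≤ ∫⁻ x, (Icc 0 a).indicator (fun _ => ENNReal.ofReal (g2 - g1)) x :=
        lintegral_mono hle
    _ = ENNReal.ofReal (g2 - g1) * volume (Icc (0:ℝ) a) := lintegral_indicator_const measurableSet_Icc _
    _ = ENNReal.ofReal a * ENNReal.ofReal (g2 - g1) := by rw [Real.volume_Icc, mul_comm]; norm_num

def pt (a b : ℝ) : Plane := WithLp.toLp 2 ![a, b]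

@[simp] lemma pt_zero (a b : ℝ) : pt a b 0 = a := rfl

@[simp] lemma pt_one (a b : ℝ) : pt a b 1 = b := rfl

lemma plane_ext_iff (x y : Plane) : x = y ↔ x 0 = y 0 ∧ x 1 = y 1 := by
  constructor
  · rintro rfl; exact ⟨rfl, rfl⟩
  · rintro ⟨h0, h1⟩; ext i; fin_cases i <;> assumption

lemma abs_coord_le_dist (x y : Plane) (i : Fin 2) : |x i - y i| ≤ dist x y := by
  rw [EuclideanSpace.dist_eq]
  rw [show |x i - y i| = Real.sqrt ((x i - y i)^2) from (Real.sqrt_sq_eq_abs _).symm]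
  apply Real.sqrt_le_sqrt
  have := Finset.single_le_sum (f := fun j => dist (x j) (y j) ^ 2) (fun j _ => by positivity) (Finset.mem_univ i)
  simpa [Real.dist_eq, sq_abs] using this

def poly (c b : ℝ) : Set Plane :=
  {x | 0 ≤ x 0 ∧ x 0 ≤ 1 ∧ 0 ≤ x 1 ∧ x 1 ≤ 1 ∧ c ≤ 2 * x 0 + x 1 ∧ b ≤ x 0 + x 1}

lemma poly_convex (c b : ℝ) : Convex ℝ (poly c b) := by
  intro x hx y hy s t hs ht hst
  obtain ⟨h1, h2, h3, h4, h5, h6⟩ := hx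
  obtain ⟨k1, k2, k3, k4, k5, k6⟩ := hy
  refine ⟨?_, ?_, ?_, ?_, ?_, ?_⟩ <;>
    simp only [PiLp.add_apply, PiLp.smul_apply, smul_eq_mul] <;> nlinarith

lemma cont_coord (i : Fin 2) : Continuous (fun x : Plane => x i) :=
  (continuous_apply i).comp (PiLp.continuousLinearEquiv 2 ℝ (fun _ : Fin 2 => ℝ)).continuous

lemma poly_isClosed (c b : ℝ) : IsClosed (poly c b) := by
  have h0 := cont_coord 0; have h1 := cont_coord 1
  have : poly c b = {x : Plane | 0 ≤ x 0} ∩ ({x | x 0 ≤ 1} ∩ ({x | 0 ≤ x 1} ∩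
      ({x | x 1 ≤ 1} ∩ ({x | c ≤ 2 * x 0 + x 1} ∩ {x | b ≤ x 0 + x 1})))) := rfl
  rw [this]
  exact (isClosed_le continuous_const h0).inter <|
    (isClosed_le h0 continuous_const).inter <|
    (isClosed_le continuous_const h1).inter <|
    (isClosed_le h1 continuous_const).inter <|
    (isClosed_le continuous_const ((continuous_const.mul h0).add h1)).inter
    (isClosed_le continuous_const (h0.add h1))

lemma poly_isCompact (c b : ℝ) : IsCompact (poly c b) := by
  apply (isCompact_closedBall (0:Plane) 2).of_isClosed_subset (poly_isClosed c b)
  intro x hx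
  obtain ⟨h1, h2, h3, h4, -, -⟩ := hx
  rw [mem_closedBall, dist_zero_right, EuclideanSpace.norm_eq]
  rw [show (2:ℝ) = Real.sqrt 4 by rw [show (4:ℝ) = 2^2 by norm_num, Real.sqrt_sq (by norm_num)]]
  apply Real.sqrt_le_sqrt
  rw [show ∑ i : Fin 2, ‖x i‖^2 = ‖x 0‖^2 + ‖x 1‖^2 by simp [Fin.sum_univ_two]]
  have a0 : ‖x 0‖^2 ≤ 1 := by rw [Real.norm_eq_abs, sq_abs]; nlinarith
  have a1 : ‖x 1‖^2 ≤ 1 := by rw [Real.norm_eq_abs, sq_abs]; nlinarith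
  linarith

lemma poly_volume_pos (c b : ℝ) (hc : 0 < c) (hc2 : c ≤ 1/2) (hb : b ≤ 3*c/4) :
    0 < volume (poly c b) := by
  have hopen : IsOpen {x : Plane | c < x 0 ∧ x 0 < 1 ∧ c < x 1 ∧ x 1 < 1} := by
    have : {x : Plane | c < x 0 ∧ x 0 < 1 ∧ c < x 1 ∧ x 1 < 1} = {x : Plane | c < x 0} ∩
        ({x | x 0 < 1} ∩ ({x | c < x 1} ∩ {x | x 1 < 1})) := rfl
    rw [this]
    exact (isOpen_lt continuous_const (cont_coord 0)).inter <|
      (isOpen_lt (cont_coord 0) continuous_const).inter <|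
      (isOpen_lt continuous_const (cont_coord 1)).inter (isOpen_lt (cont_coord 1) continuous_const)
  have hne : (pt (3/4) (3/4)) ∈ {x : Plane | c < x 0 ∧ x 0 < 1 ∧ c < x 1 ∧ x 1 < 1} := by
    simp only [mem_setOf_eq, pt_zero, pt_one]
    refine ⟨by linarith, by norm_num, by linarith, by norm_num⟩
  have hsub : {x : Plane | c < x 0 ∧ x 0 < 1 ∧ c < x 1 ∧ x 1 < 1} ⊆ poly c b := by
    rintro x ⟨a1, a2, a3, a4⟩
    exact ⟨by linarith, by linarith, by linarith, by linarith, by linarith, by linarith⟩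
  exact lt_of_lt_of_le (hopen.measure_pos volume ⟨_, hne⟩) (measure_mono hsub)

lemma not_extreme_of_pm {P : Set Plane} {v d : Plane} (hd : d ≠ 0)
    (hp : v + d ∈ P) (hm : v - d ∈ P) : v ∉ P.extremePoints ℝ := by
  intro hext
  have hseg : v ∈ openSegment ℝ (v - d) (v + d) :=
    ⟨1/2, 1/2, by norm_num, by norm_num, by norm_num, by module⟩
  have h := hext.2 hm hp hseg
  apply hd
  have : d = v - (v - d) := by abel
  rw [this, h, sub_self]

lemma pt_ne_zero_fst {p q : ℝ} (hp : p ≠ 0) : pt p q ≠ 0 := by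
  intro h; exact hp (by simpa using congrFun (congrArg WithLp.ofLp h) 0)

lemma pt_ne_zero_snd {p q : ℝ} (hq : q ≠ 0) : pt p q ≠ 0 := by
  intro h; exact hq (by simpa using congrFun (congrArg WithLp.ofLp h) 1)

lemma mem_poly_add {c b : ℝ} {v : Plane} {p q : ℝ}
    (h : 0 ≤ v 0 + p ∧ v 0 + p ≤ 1 ∧ 0 ≤ v 1 + q ∧ v 1 + q ≤ 1 ∧
      c ≤ 2 * (v 0 + p) + (v 1 + q) ∧ b ≤ (v 0 + p) + (v 1 + q)) :
    v + pt p q ∈ poly c b := h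

lemma mem_poly_sub {c b : ℝ} {v : Plane} {p q : ℝ}
    (h : 0 ≤ v 0 - p ∧ v 0 - p ≤ 1 ∧ 0 ≤ v 1 - q ∧ v 1 - q ≤ 1 ∧
      c ≤ 2 * (v 0 - p) + (v 1 - q) ∧ b ≤ (v 0 - p) + (v 1 - q)) :
    v - pt p q ∈ poly c b := h

lemma exists_pos_le5 (a b c d e : ℝ) (ha : 0 < a) (hb : 0 < b) (hc : 0 < c)
    (hd : 0 < d) (he : 0 < e) :
    ∃ δ : ℝ, 0 < δ ∧ δ ≤ a ∧ δ ≤ b ∧ δ ≤ c ∧ δ ≤ d ∧ δ ≤ e := by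
  refine ⟨min a (min b (min c (min d e))), ?_, min_le_left _ _, ?_, ?_, ?_, ?_⟩
  · simp only [lt_min_iff]; exact ⟨ha, hb, hc, hd, he⟩
  · exact (min_le_right _ _).trans (min_le_left _ _)
  · exact (min_le_right _ _).trans ((min_le_right _ _).trans (min_le_left _ _))
  · exact (min_le_right _ _).trans ((min_le_right _ _).trans ((min_le_right _ _).trans (min_le_left _ _)))
  · exact (min_le_right _ _).trans ((min_le_right _ _).trans ((min_le_right _ _).trans (min_le_right _ _)))

set_option maxHeartbeats 1000000 in
lemma poly_extreme_classify {c b : ℝ} (hc : 0 < c) (hc2 : c ≤ 1/2) (hb1 : c/2 < b)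
    (hb2 : b ≤ 3*c/4) {v : Plane} (hv : v ∈ (poly c b).extremePoints ℝ) :
    v = pt 0 c ∨ v = pt 0 1 ∨ v = pt 1 0 ∨ v = pt 1 1 ∨ v = pt b 0 ∨
      v = pt (c-b) (2*b-c) := by
  obtain ⟨h1, h2, h3, h4, h5, h6⟩ := hv.1
  by_contra hcon
  push_neg at hcon
  obtain ⟨ne1, ne2, ne3, ne4, ne5, ne6⟩ := hcon
  rcases eq_or_lt_of_le h1 with e0 | e0
  · -- v 0 = 0
    have hv1c : c ≤ v 1 := by linarith
    rcases eq_or_lt_of_le hv1c with f | f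
    · exact ne1 ((plane_ext_iff _ _).2 ⟨show v 0 = 0 from e0.symm, show v 1 = c from f.symm⟩)
    rcases eq_or_lt_of_le h4 with g | g
    · exact ne2 ((plane_ext_iff _ _).2 ⟨e0.symm, g⟩)
    obtain ⟨δ, d0, d1, d2, -, -, -⟩ := exists_pos_le5 ((v 1 - c)/2) ((1 - v 1)/2) 1 1 1
      (by linarith) (by linarith) one_pos one_pos one_pos
    exact absurd hv (not_extreme_of_pm (d := pt 0 δ) (pt_ne_zero_snd (ne_of_gt d0))
      (mem_poly_add ⟨by linarith, by linarith, by linarith, by linarith, by linarith, by linarith⟩)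
      (mem_poly_sub ⟨by linarith, by linarith, by linarith, by linarith, by linarith, by linarith⟩))
  rcases eq_or_lt_of_le h2 with e1 | e1
  · -- v 0 = 1
    rcases eq_or_lt_of_le h3 with f | f
    · exact ne3 ((plane_ext_iff _ _).2 ⟨e1, f.symm⟩)
    rcases eq_or_lt_of_le h4 with g | g
    · exact ne4 ((plane_ext_iff _ _).2 ⟨e1, g⟩)
    obtain ⟨δ, d0, d1, d2, -, -, -⟩ := exists_pos_le5 ((v 1)/2) ((1 - v 1)/2) 1 1 1
      (by linarith) (by linarith) one_pos one_pos one_pos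
    exact absurd hv (not_extreme_of_pm (d := pt 0 δ) (pt_ne_zero_snd (ne_of_gt d0))
      (mem_poly_add ⟨by linarith, by linarith, by linarith, by linarith, by linarith, by linarith⟩)
      (mem_poly_sub ⟨by linarith, by linarith, by linarith, by linarith, by linarith, by linarith⟩))
  -- 0 < v 0 < 1
  rcases eq_or_lt_of_le h4 with g | g
  · -- v 1 = 1
    obtain ⟨δ, d0, d1, d2, -, -, -⟩ := exists_pos_le5 ((v 0)/2) ((1 - v 0)/2) 1 1 1
      (by linarith) (by linarith) one_pos one_pos one_pos
    exact absurd hv (not_extreme_of_pm (d := pt δ 0) (pt_ne_zero_fst (ne_of_gt d0))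
      (mem_poly_add ⟨by linarith, by linarith, by linarith, by linarith, by linarith, by linarith⟩)
      (mem_poly_sub ⟨by linarith, by linarith, by linarith, by linarith, by linarith, by linarith⟩))
  rcases eq_or_lt_of_le h3 with f | f
  · -- v 1 = 0
    have hbv : b ≤ v 0 := by linarith
    rcases eq_or_lt_of_le hbv with k | k
    · exact ne5 ((plane_ext_iff _ _).2 ⟨k.symm, f.symm⟩)
    obtain ⟨δ, d0, d1, d2, -, -, -⟩ := exists_pos_le5 ((v 0 - b)/2) ((1 - v 0)/2) 1 1 1
      (by linarith) (by linarith) one_pos one_pos one_pos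
    exact absurd hv (not_extreme_of_pm (d := pt δ 0) (pt_ne_zero_fst (ne_of_gt d0))
      (mem_poly_add ⟨by linarith, by linarith, by linarith, by linarith, by linarith, by linarith⟩)
      (mem_poly_sub ⟨by linarith, by linarith, by linarith, by linarith, by linarith, by linarith⟩))
  -- 0 < v 0 < 1, 0 < v 1 < 1
  rcases eq_or_lt_of_le h5 with m | m
  · -- 2 v0 + v1 = c
    have hk : v 0 ≤ c - b := by linarith
    rcases eq_or_lt_of_le hk with k | k
    · exact ne6 ((plane_ext_iff _ _).2 ⟨k, show v 1 = 2*b - c by linarith⟩)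
    obtain ⟨δ, d0, d1, d2, d3, d4, d5⟩ := exists_pos_le5 ((c - b - v 0)/2) ((v 1)/4)
      ((1 - v 1)/4) ((v 0)/2) ((1 - v 0)/2)
      (by linarith) (by linarith) (by linarith) (by linarith) (by linarith)
    exact absurd hv (not_extreme_of_pm (d := pt δ (-2*δ)) (pt_ne_zero_fst (ne_of_gt d0))
      (mem_poly_add ⟨by linarith, by linarith, by linarith, by linarith, by linarith, by linarith⟩)
      (mem_poly_sub ⟨by linarith, by linarith, by linarith, by linarith, by linarith, by linarith⟩))
  rcases eq_or_lt_of_le h6 with m2 | m2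
  · -- v0 + v1 = b
    obtain ⟨δ, d0, d1, d2, d3, d4, d5⟩ := exists_pos_le5 ((2*v 0 + v 1 - c)/2) ((v 1)/2)
      ((1 - v 1)/2) ((v 0)/2) ((1 - v 0)/2)
      (by linarith) (by linarith) (by linarith) (by linarith) (by linarith)
    exact absurd hv (not_extreme_of_pm (d := pt δ (-δ)) (pt_ne_zero_fst (ne_of_gt d0))
      (mem_poly_add ⟨by linarith, by linarith, by linarith, by linarith, by linarith, by linarith⟩)
      (mem_poly_sub ⟨by linarith, by linarith, by linarith, by linarith, by linarith, by linarith⟩))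
  · -- everything strict
    obtain ⟨δ, d0, d1, d2, d3, d4, -⟩ := exists_pos_le5 ((2*v 0 + v 1 - c)/4) ((v 0 + v 1 - b)/2)
      ((v 0)/2) ((1 - v 0)/2) 1
      (by linarith) (by linarith) (by linarith) (by linarith) one_pos
    exact absurd hv (not_extreme_of_pm (d := pt δ 0) (pt_ne_zero_fst (ne_of_gt d0))
      (mem_poly_add ⟨by linarith, by linarith, by linarith, by linarith, by linarith, by linarith⟩)
      (mem_poly_sub ⟨by linarith, by linarith, by linarith, by linarith, by linarith, by linarith⟩))

lemma comb_coord (v : Plane) (t₁ t₂ : ℝ) (u₁ u₂ : Fin 2 → ℤ) (i : Fin 2) :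
    (v + t₁ • vec u₁ + t₂ • vec u₂) i = v i + t₁ * (u₁ i : ℝ) + t₂ * (u₂ i : ℝ) := rfl

lemma vec_linIndep {u₁ u₂ : Fin 2 → ℤ} (h : u₁ 0 * u₂ 1 - u₁ 1 * u₂ 0 ≠ 0) :
    LinearIndependent ℝ ![vec u₁, vec u₂] := by
  rw [LinearIndependent.pair_iff]
  intro s t hst
  have c0 : s * (u₁ 0 : ℝ) + t * (u₂ 0 : ℝ) = 0 := by
    have := congrFun (congrArg WithLp.ofLp hst) 0
    simpa [vec, PiLp.add_apply, PiLp.smul_apply, smul_eq_mul] using this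
  have c1 : s * (u₁ 1 : ℝ) + t * (u₂ 1 : ℝ) = 0 := by
    have := congrFun (congrArg WithLp.ofLp hst) 1
    simpa [vec, PiLp.add_apply, PiLp.smul_apply, smul_eq_mul] using this
  have hdet : ((u₁ 0 * u₂ 1 - u₁ 1 * u₂ 0 : ℤ) : ℝ) ≠ 0 := by exact_mod_cast h
  push_cast at hdet
  have hs : s * ((u₁ 0 : ℝ) * (u₂ 1 : ℝ) - (u₁ 1 : ℝ) * (u₂ 0 : ℝ)) = 0 := by
    linear_combination (u₂ 1 : ℝ) * c0 - (u₂ 0 : ℝ) * c1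
  have ht : t * ((u₁ 0 : ℝ) * (u₂ 1 : ℝ) - (u₁ 1 : ℝ) * (u₂ 0 : ℝ)) = 0 := by
    linear_combination (u₁ 0 : ℝ) * c1 - (u₁ 1 : ℝ) * c0
  exact ⟨by rcases mul_eq_zero.1 hs with h' | h'; exact h'; exact absurd h' hdet,
    by rcases mul_eq_zero.1 ht with h' | h'; exact h'; exact absurd h' hdet⟩

lemma poly_isDelzant {c b : ℝ} (hc : 0 < c) (hc2 : c ≤ 1/2) (hb1 : c/2 < b)
    (hb2 : b ≤ 3*c/4) : IsDelzant (poly c b) := by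
  refine ⟨poly_isCompact c b, poly_convex c b, poly_volume_pos c b hc hc2 hb2, ?_⟩
  intro v hv
  have hε1 : min (c/8) (2*b - c) ≤ c/8 := min_le_left _ _
  have hε2 : min (c/8) (2*b - c) ≤ 2*b - c := min_le_right _ _
  have hεpos : (0:ℝ) < min (c/8) (2*b - c) := lt_min (by linarith) (by linarith)
  rcases poly_extreme_classify hc hc2 hb1 hb2 hv with h | h | h | h | h | h <;> subst h
  · -- (0, c)
    refine ⟨![0,1], ![1,-2], vec_linIndep (by norm_num), by right; norm_num,
      min (c/8) (2*b - c), hεpos, ?_⟩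
    ext x
    simp only [mem_inter_iff, mem_setOf_eq]
    constructor
    · rintro ⟨⟨h1, h2, h3, h4, h5, h6⟩, hball⟩
      refine ⟨⟨2 * x 0 + x 1 - c, x 0, by linarith, h1, ?_⟩, hball⟩
      rw [plane_ext_iff]
      constructor <;> simp [comb_coord, vec] <;> ring
    · rintro ⟨⟨t₁, t₂, ht₁, ht₂, hx⟩, hball⟩
      have hx0 : x 0 = t₂ := by rw [hx, comb_coord]; simp [vec]
      have hx1 : x 1 = c + t₁ - 2*t₂ := by rw [hx, comb_coord]; simp [vec]; ring
      have hd0 := (abs_coord_le_dist x (pt 0 c) 0).trans (mem_closedBall.1 hball)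
      have hd1 := (abs_coord_le_dist x (pt 0 c) 1).trans (mem_closedBall.1 hball)
      rw [pt_zero] at hd0; rw [pt_one] at hd1
      rw [abs_le] at hd0 hd1
      refine ⟨⟨by linarith, by linarith [hd0.2], by linarith [hd1.1], by linarith [hd1.2],
        by linarith, by linarith [hd0.2, hd1.1]⟩, hball⟩
  · -- (0, 1)
    refine ⟨![1,0], ![0,-1], vec_linIndep (by norm_num), by right; norm_num,
      min (c/8) (2*b - c), hεpos, ?_⟩
    ext x
    simp only [mem_inter_iff, mem_setOf_eq]
    constructor
    · rintro ⟨⟨h1, h2, h3, h4, h5, h6⟩, hball⟩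
      refine ⟨⟨x 0, 1 - x 1, h1, by linarith, ?_⟩, hball⟩
      rw [plane_ext_iff]
      constructor <;> simp [comb_coord, vec] <;> ring
    · rintro ⟨⟨t₁, t₂, ht₁, ht₂, hx⟩, hball⟩
      have hx0 : x 0 = t₁ := by rw [hx, comb_coord]; simp [vec]
      have hx1 : x 1 = 1 - t₂ := by rw [hx, comb_coord]; simp [vec]; ring
      have hd0 := (abs_coord_le_dist x (pt 0 1) 0).trans (mem_closedBall.1 hball)
      have hd1 := (abs_coord_le_dist x (pt 0 1) 1).trans (mem_closedBall.1 hball)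
      rw [pt_zero] at hd0; rw [pt_one] at hd1
      rw [abs_le] at hd0 hd1
      refine ⟨⟨by linarith, by linarith [hd0.2], by linarith [hd1.1], by linarith,
        by linarith [hd1.1], by linarith [hd1.1]⟩, hball⟩
  · -- (1, 0)
    refine ⟨![-1,0], ![0,1], vec_linIndep (by norm_num), by right; norm_num,
      min (c/8) (2*b - c), hεpos, ?_⟩
    ext x
    simp only [mem_inter_iff, mem_setOf_eq]
    constructor
    · rintro ⟨⟨h1, h2, h3, h4, h5, h6⟩, hball⟩
      refine ⟨⟨1 - x 0, x 1, by linarith, h3, ?_⟩, hball⟩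
      rw [plane_ext_iff]
      constructor <;> simp [comb_coord, vec] <;> ring
    · rintro ⟨⟨t₁, t₂, ht₁, ht₂, hx⟩, hball⟩
      have hx0 : x 0 = 1 - t₁ := by rw [hx, comb_coord]; simp [vec]; ring
      have hx1 : x 1 = t₂ := by rw [hx, comb_coord]; simp [vec]
      have hd0 := (abs_coord_le_dist x (pt 1 0) 0).trans (mem_closedBall.1 hball)
      have hd1 := (abs_coord_le_dist x (pt 1 0) 1).trans (mem_closedBall.1 hball)
      rw [pt_zero] at hd0; rw [pt_one] at hd1
      rw [abs_le] at hd0 hd1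
      refine ⟨⟨by linarith [hd0.1], by linarith, by linarith, by linarith [hd1.2],
        by linarith [hd0.1, hd1.1], by linarith [hd0.1, hd1.1]⟩, hball⟩
  · -- (1, 1)
    refine ⟨![-1,0], ![0,-1], vec_linIndep (by norm_num), by left; norm_num,
      min (c/8) (2*b - c), hεpos, ?_⟩
    ext x
    simp only [mem_inter_iff, mem_setOf_eq]
    constructor
    · rintro ⟨⟨h1, h2, h3, h4, h5, h6⟩, hball⟩
      refine ⟨⟨1 - x 0, 1 - x 1, by linarith, by linarith, ?_⟩, hball⟩
      rw [plane_ext_iff]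
      constructor <;> simp [comb_coord, vec] <;> ring
    · rintro ⟨⟨t₁, t₂, ht₁, ht₂, hx⟩, hball⟩
      have hx0 : x 0 = 1 - t₁ := by rw [hx, comb_coord]; simp [vec]; ring
      have hx1 : x 1 = 1 - t₂ := by rw [hx, comb_coord]; simp [vec]; ring
      have hd0 := (abs_coord_le_dist x (pt 1 1) 0).trans (mem_closedBall.1 hball)
      have hd1 := (abs_coord_le_dist x (pt 1 1) 1).trans (mem_closedBall.1 hball)
      rw [pt_zero] at hd0; rw [pt_one] at hd1
      rw [abs_le] at hd0 hd1
      refine ⟨⟨by linarith [hd0.1], by linarith, by linarith [hd1.1], by linarith,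
        by linarith [hd0.1, hd1.1], by linarith [hd0.1, hd1.1]⟩, hball⟩
  · -- (b, 0)
    refine ⟨![1,0], ![-1,1], vec_linIndep (by norm_num), by left; norm_num,
      min (c/8) (2*b - c), hεpos, ?_⟩
    ext x
    simp only [mem_inter_iff, mem_setOf_eq]
    constructor
    · rintro ⟨⟨h1, h2, h3, h4, h5, h6⟩, hball⟩
      refine ⟨⟨x 0 + x 1 - b, x 1, by linarith, h3, ?_⟩, hball⟩
      rw [plane_ext_iff]
      constructor <;> simp [comb_coord, vec] <;> ring
    · rintro ⟨⟨t₁, t₂, ht₁, ht₂, hx⟩, hball⟩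
      have hx0 : x 0 = b + t₁ - t₂ := by rw [hx, comb_coord]; simp [vec]; ring
      have hx1 : x 1 = t₂ := by rw [hx, comb_coord]; simp [vec]
      have hd0 := (abs_coord_le_dist x (pt b 0) 0).trans (mem_closedBall.1 hball)
      have hd1 := (abs_coord_le_dist x (pt b 0) 1).trans (mem_closedBall.1 hball)
      rw [pt_zero] at hd0; rw [pt_one] at hd1
      rw [abs_le] at hd0 hd1
      refine ⟨⟨by linarith [hd0.1], by linarith [hd0.2], by linarith, by linarith [hd1.2],
        by linarith [hd0.1], by linarith⟩, hball⟩
  · -- (c - b, 2b - c)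
    refine ⟨![-1,2], ![1,-1], vec_linIndep (by norm_num), by right; norm_num,
      min (c/8) (2*b - c), hεpos, ?_⟩
    ext x
    simp only [mem_inter_iff, mem_setOf_eq]
    constructor
    · rintro ⟨⟨h1, h2, h3, h4, h5, h6⟩, hball⟩
      refine ⟨⟨x 0 + x 1 - b, 2 * x 0 + x 1 - c, by linarith, by linarith, ?_⟩, hball⟩
      rw [plane_ext_iff]
      constructor <;> simp [comb_coord, vec] <;> ring
    · rintro ⟨⟨t₁, t₂, ht₁, ht₂, hx⟩, hball⟩
      have hx0 : x 0 = (c - b) - t₁ + t₂ := by rw [hx, comb_coord]; simp [vec]; ring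
      have hx1 : x 1 = (2*b - c) + 2*t₁ - t₂ := by rw [hx, comb_coord]; simp [vec]; ring
      have hd0 := (abs_coord_le_dist x (pt (c-b) (2*b-c)) 0).trans (mem_closedBall.1 hball)
      have hd1 := (abs_coord_le_dist x (pt (c-b) (2*b-c)) 1).trans (mem_closedBall.1 hball)
      rw [pt_zero] at hd0; rw [pt_one] at hd1
      rw [abs_le] at hd0 hd1
      refine ⟨⟨by linarith [hd0.1], by linarith [hd0.2], by linarith [hd1.1], by linarith [hd1.2],
        by linarith, by linarith⟩, hball⟩

lemma subset_of_interior_subset_closed {s t : Set Plane} (hs : Convex ℝ s) (ht : IsClosed t)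
    (hne : (interior s).Nonempty) (h : interior s ⊆ t) : s ⊆ t := by
  intro x hx
  obtain ⟨y, hy⟩ := hne
  have hz : ∀ n : ℕ, x + (1/((n:ℝ)+1)) • (y - x) ∈ t := by
    intro n
    refine h (hs.add_smul_sub_mem_interior hx hy ⟨by positivity, ?_⟩)
    rw [div_le_one (by positivity)]
    linarith [Nat.cast_nonneg (α := ℝ) n]
  have h0 : Tendsto (fun n : ℕ => (1/((n:ℝ)+1))) atTop (nhds 0) :=
    tendsto_one_div_add_atTop_nhds_zero_nat
  have htend : Tendsto (fun n : ℕ => x + (1/((n:ℝ)+1)) • (y - x)) atTop (nhds x) := by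
    have := (h0.smul_const (y - x)).const_add x
    simpa using this
  exact ht.mem_of_tendsto htend (Filter.Eventually.of_forall hz)

lemma interior_nonempty_of_volume_pos {s : Set Plane} (hconv : Convex ℝ s)
    (h : 0 < volume s) : (interior s).Nonempty := by
  by_contra hne
  rw [not_nonempty_iff_eq_empty] at hne
  have hf := hconv.addHaar_frontier (volume : Measure Plane)
  rw [frontier, hne, diff_empty] at hf
  exact absurd ((measure_mono subset_closure).trans_eq hf) (by simpa using h.ne')

lemma vertex_extreme {c : ℝ} (hc : 0 < c) (hc2 : c ≤ 1/2) :
    pt (c/2) 0 ∈ (poly c (c/2)).extremePoints ℝ := by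
  constructor
  · refine ⟨by simp; linarith, by simp; linarith, by simp, by simp, by simp; linarith, by simp⟩
  · rintro x₁ hx₁ x₂ hx₂ ⟨a, b, ha, hb, hab, habv⟩
    obtain ⟨p1, p2, p3, p4, p5, p6⟩ := hx₁
    obtain ⟨q1, q2, q3, q4, q5, q6⟩ := hx₂
    have e0 : a * x₁ 0 + b * x₂ 0 = c/2 := by
      have := congrFun (congrArg WithLp.ofLp habv) 0
      simpa [PiLp.add_apply, PiLp.smul_apply, smul_eq_mul] using this
    have e1 : a * x₁ 1 + b * x₂ 1 = 0 := by
      have := congrFun (congrArg WithLp.ofLp habv) 1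
      simpa [PiLp.add_apply, PiLp.smul_apply, smul_eq_mul] using this
    have m1 : 0 ≤ a * x₁ 1 := mul_nonneg ha.le p3
    have m2 : 0 ≤ b * x₂ 1 := mul_nonneg hb.le q3
    have z1 : a * x₁ 1 = 0 := by linarith
    have z2 : b * x₂ 1 = 0 := by linarith
    have x11 : x₁ 1 = 0 := by
      rcases mul_eq_zero.1 z1 with h | h
      · exact absurd h (ne_of_gt ha)
      · exact h
    have x21 : x₂ 1 = 0 := by
      rcases mul_eq_zero.1 z2 with h | h
      · exact absurd h (ne_of_gt hb)
      · exact h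
    have w1 : c/2 ≤ x₁ 0 := by linarith
    have w2 : c/2 ≤ x₂ 0 := by linarith
    have m3 : 0 ≤ a * (x₁ 0 - c/2) := mul_nonneg ha.le (by linarith)
    have m4 : 0 ≤ b * (x₂ 0 - c/2) := mul_nonneg hb.le (by linarith)
    have zsum : a * (x₁ 0 - c/2) + b * (x₂ 0 - c/2) = 0 := by
      linear_combination e0 - (c/2) * hab
    have z3 : a * (x₁ 0 - c/2) = 0 := by linarith
    have z4 : b * (x₂ 0 - c/2) = 0 := by linarith
    have x10 : x₁ 0 = c/2 := by
      rcases mul_eq_zero.1 z3 with h | h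
      · exact absurd h (ne_of_gt ha)
      · linarith
    have x20 : x₂ 0 = c/2 := by
      rcases mul_eq_zero.1 z4 with h | h
      · exact absurd h (ne_of_gt hb)
      · linarith
    rw [plane_ext_iff]; simp [x10, x11, x20, x21]

lemma comb_coord2 (t₁ t₂ : ℝ) (u₁ u₂ : Fin 2 → ℤ) (i : Fin 2) :
    (t₁ • vec u₁ + t₂ • vec u₂) i = t₁ * (u₁ i : ℝ) + t₂ * (u₂ i : ℝ) := rfl

lemma abs_coord_le_norm (y : Plane) (i : Fin 2) : |y i| ≤ ‖y‖ := by
  rw [EuclideanSpace.norm_eq]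
  rw [show |y i| = Real.sqrt ((y i)^2) from (Real.sqrt_sq_eq_abs _).symm]
  apply Real.sqrt_le_sqrt
  have := Finset.single_le_sum (f := fun j => ‖y j‖ ^ 2) (fun j _ => by positivity) (Finset.mem_univ i)
  simpa [Real.norm_eq_abs, sq_abs] using this

lemma norm_pt_le_three {a b : ℝ} (ha : |a| ≤ 2) (hb : |b| ≤ 2) : ‖pt a b‖ ≤ 3 := by
  rw [EuclideanSpace.norm_eq]
  rw [show (3:ℝ) = Real.sqrt 9 by rw [show (9:ℝ) = 3^2 by norm_num, Real.sqrt_sq (by norm_num)]]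
  apply Real.sqrt_le_sqrt
  have h1 : ‖pt a b 0‖^2 ≤ 4 := by rw [Real.norm_eq_abs, pt_zero]; nlinarith [abs_nonneg a, sq_abs a]
  have h2 : ‖pt a b 1‖^2 ≤ 4 := by rw [Real.norm_eq_abs, pt_one]; nlinarith [abs_nonneg b, sq_abs b]
  rw [Fin.sum_univ_two]
  linarith

set_option maxHeartbeats 1600000 in
lemma no_unimodular_cone {c : ℝ} (hc : 0 < c) (hc2 : c ≤ 1/2) {u₁ u₂ : Fin 2 → ℤ}
    (hdet : u₁ 0 * u₂ 1 - u₁ 1 * u₂ 0 = 1 ∨ u₁ 0 * u₂ 1 - u₁ 1 * u₂ 0 = -1)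
    {ε₀ : ℝ} (hε₀ : 0 < ε₀)
    (hcone : poly c (c/2) ∩ closedBall (pt (c/2) 0) ε₀ =
      {x : Plane | ∃ t₁ t₂ : ℝ, 0 ≤ t₁ ∧ 0 ≤ t₂ ∧
        x = pt (c/2) 0 + t₁ • vec u₁ + t₂ • vec u₂} ∩ closedBall (pt (c/2) 0) ε₀) :
    False := by
  set v := pt (c/2) 0 with hv
  -- Step A : the generators lie in the cone {y1 ≥ 0, 2 y0 + y1 ≥ 0}
  have genA : ∀ u : Fin 2 → ℤ, (∀ x : Plane, (∃ t₁ t₂ : ℝ, 0 ≤ t₁ ∧ 0 ≤ t₂ ∧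
      x = v + t₁ • vec u₁ + t₂ • vec u₂) → x ∈ closedBall v ε₀ → x ∈ poly c (c/2)) →
      (∃ t₁ t₂ : ℝ, 0 ≤ t₁ ∧ 0 ≤ t₂ ∧ vec u = t₁ • vec u₁ + t₂ • vec u₂) →
      0 ≤ (u 1 : ℝ) ∧ 0 ≤ 2*(u 0 : ℝ) + (u 1 : ℝ) := by
    intro u hdir ⟨t₁, t₂, ht₁, ht₂, hu⟩
    set τ := ε₀ / (1 + ‖vec u‖) with hτ
    have hτ0 : 0 < τ := by positivity
    have hball : v + τ • vec u ∈ closedBall v ε₀ := by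
      rw [mem_closedBall, dist_eq_norm, add_sub_cancel_left, norm_smul]
      rw [Real.norm_eq_abs, abs_of_pos hτ0, hτ]
      rw [div_mul_eq_mul_div, div_le_iff₀ (by positivity)]
      nlinarith [norm_nonneg (vec u)]
    have hmem : v + τ • vec u ∈ poly c (c/2) := by
      apply hdir _ ⟨τ * t₁, τ * t₂, by positivity, by positivity, ?_⟩ hball
      have hu0 : (u 0 : ℝ) = t₁ * (u₁ 0 : ℝ) + t₂ * (u₂ 0 : ℝ) := congrFun (congrArg WithLp.ofLp hu) 0
      have hu1 : (u 1 : ℝ) = t₁ * (u₁ 1 : ℝ) + t₂ * (u₂ 1 : ℝ) := congrFun (congrArg WithLp.ofLp hu) 1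
      refine (plane_ext_iff _ _).2 ⟨?_, ?_⟩
      · show v 0 + τ * (u 0 : ℝ) = v 0 + (τ * t₁) * (u₁ 0 : ℝ) + (τ * t₂) * (u₂ 0 : ℝ)
        rw [hu0]; ring
      · show v 1 + τ * (u 1 : ℝ) = v 1 + (τ * t₁) * (u₁ 1 : ℝ) + (τ * t₂) * (u₂ 1 : ℝ)
        rw [hu1]; ring
    obtain ⟨-, -, c3, -, c5, c6⟩ := hmem
    have hx0 : (v + τ • vec u) 0 = c/2 + τ * (u 0 : ℝ) := rfl
    have hx1 : (v + τ • vec u) 1 = τ * (u 1 : ℝ) := by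
      show (0:ℝ) + τ * (u 1 : ℝ) = _ ; ring
    rw [hx0, hx1] at c5
    have hy1 : 0 ≤ τ * (u 1 : ℝ) := by rw [hx1] at c3; exact c3
    constructor
    · by_contra hneg
      push_neg at hneg
      have := mul_neg_of_pos_of_neg hτ0 hneg
      linarith
    · by_contra hneg
      push_neg at hneg
      have h2 := mul_neg_of_pos_of_neg hτ0 hneg
      have hrw : τ * (2*(u 0 : ℝ) + (u 1 : ℝ)) = 2*(τ*(u 0 : ℝ)) + τ*(u 1 : ℝ) := by ring
      linarith
  -- direction from cone description into the polygon
  have hdir : ∀ x : Plane, (∃ t₁ t₂ : ℝ, 0 ≤ t₁ ∧ 0 ≤ t₂ ∧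
      x = v + t₁ • vec u₁ + t₂ • vec u₂) → x ∈ closedBall v ε₀ → x ∈ poly c (c/2) := by
    intro x hx hb
    have hmem : x ∈ {x : Plane | ∃ t₁ t₂ : ℝ, 0 ≤ t₁ ∧ 0 ≤ t₂ ∧
        x = v + t₁ • vec u₁ + t₂ • vec u₂} ∩ closedBall v ε₀ := ⟨hx, hb⟩
    rw [← hcone] at hmem
    exact hmem.1
  have hU1 : 0 ≤ (u₁ 1 : ℝ) ∧ 0 ≤ 2*(u₁ 0 : ℝ) + (u₁ 1 : ℝ) := by
    refine genA u₁ hdir ⟨1, 0, zero_le_one, le_refl 0, ?_⟩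
    rw [one_smul, zero_smul, add_zero]
  have hU2 : 0 ≤ (u₂ 1 : ℝ) ∧ 0 ≤ 2*(u₂ 0 : ℝ) + (u₂ 1 : ℝ) := by
    refine genA u₂ hdir ⟨0, 1, le_refl 0, zero_le_one, ?_⟩
    rw [one_smul, zero_smul, zero_add]
  -- forward: points of the plane cone are generated by u₁, u₂
  set s := min ε₀ (c/8) / 3 with hsdef
  have hs0 : 0 < s := by
    apply div_pos (lt_min hε₀ (by linarith)) (by norm_num)
  have hs1 : s ≤ ε₀ / 3 := by
    rw [hsdef]; have := min_le_left ε₀ (c/8); linarith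
  have hs2 : s ≤ c / 24 := by
    have := min_le_right ε₀ (c/8)
    rw [hsdef]; linarith
  have hfwd : ∀ a b : ℝ, |a| ≤ 2 → |b| ≤ 2 → 0 ≤ b → 0 ≤ 2*a + b →
      ∃ t₁ t₂ : ℝ, 0 ≤ t₁ ∧ 0 ≤ t₂ ∧
        s * a = t₁ * (u₁ 0 : ℝ) + t₂ * (u₂ 0 : ℝ) ∧
        s * b = t₁ * (u₁ 1 : ℝ) + t₂ * (u₂ 1 : ℝ) := by
    intro a b ha hb hb0 hab
    have ha1 : -2 ≤ a := by cases' abs_le.1 ha with h _; linarith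
    have ha2 : a ≤ 2 := (abs_le.1 ha).2
    have hbb : b ≤ 2 := (abs_le.1 hb).2
    have hx0 : (v + s • pt a b) 0 = c/2 + s * a := rfl
    have hx1 : (v + s • pt a b) 1 = s * b := by
      show (0:ℝ) + s * b = _ ; ring
    have hpm : v + s • pt a b ∈ poly c (c/2) := by
      have k1 := mul_le_mul_of_nonneg_left ha1 hs0.le
      have k2 := mul_le_mul_of_nonneg_left ha2 hs0.le
      have k3 := mul_le_mul_of_nonneg_left hbb hs0.le
      have k4 : 0 ≤ s * (2*a+b) := mul_nonneg hs0.le hab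
      have k5 : s * (2*a+b) = 2*(s*a) + s*b := by ring
      have hab2 : (0:ℝ) ≤ a + b := by linarith
      have k6 : 0 ≤ s * (a+b) := mul_nonneg hs0.le hab2
      have k7 : s * (a+b) = s*a + s*b := by ring
      refine ⟨?_, ?_, ?_, ?_, ?_, ?_⟩
      · rw [hx0]; linarith
      · rw [hx0]; linarith
      · rw [hx1]; exact mul_nonneg hs0.le hb0
      · rw [hx1]; linarith
      · rw [hx0, hx1]; linarith
      · rw [hx0, hx1]; linarith
    have hbl : v + s • pt a b ∈ closedBall v ε₀ := by
      rw [mem_closedBall, dist_eq_norm, add_sub_cancel_left, norm_smul,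
        Real.norm_eq_abs, abs_of_pos hs0]
      have := norm_pt_le_three ha hb
      nlinarith [norm_nonneg (pt a b)]
    have hmem : v + s • pt a b ∈ {x : Plane | ∃ t₁ t₂ : ℝ, 0 ≤ t₁ ∧ 0 ≤ t₂ ∧
        x = v + t₁ • vec u₁ + t₂ • vec u₂} ∩ closedBall v ε₀ := by
      rw [← hcone]; exact ⟨hpm, hbl⟩
    obtain ⟨t₁, t₂, ht₁, ht₂, hx⟩ := hmem.1
    refine ⟨t₁, t₂, ht₁, ht₂, ?_, ?_⟩
    · have h0 := congrFun (congrArg WithLp.ofLp hx) 0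
      rw [hx0] at h0
      have : c/2 + s*a = c/2 + t₁ * (u₁ 0 : ℝ) + t₂ * (u₂ 0 : ℝ) := h0
      linarith
    · have h1 := congrFun (congrArg WithLp.ofLp hx) 1
      rw [hx1] at h1
      have : s*b = 0 + t₁ * (u₁ 1 : ℝ) + t₂ * (u₂ 1 : ℝ) := h1
      linarith
  obtain ⟨a₁, a₂, ha₁, ha₂, eqA0, eqA1⟩ := hfwd 1 0 (by norm_num) (by norm_num) le_rfl (by norm_num)
  obtain ⟨s₁, s₂, hs₁, hs₂, eqW0, eqW1⟩ := hfwd (-1) 2 (by norm_num) (by norm_num) (by norm_num) (by norm_num)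
  rw [mul_zero] at eqA1
  rw [mul_one] at eqA0
  -- a-coefficients kill the second coordinates
  have m1 : 0 ≤ a₁ * (u₁ 1 : ℝ) := mul_nonneg ha₁ hU1.1
  have m2 : 0 ≤ a₂ * (u₂ 1 : ℝ) := mul_nonneg ha₂ hU2.1
  have z1 : a₁ * (u₁ 1 : ℝ) = 0 := by linarith
  have z2 : a₂ * (u₂ 1 : ℝ) = 0 := by linarith
  have claim1 : (u₁ 1 : ℝ) = 0 ∨ (u₂ 1 : ℝ) = 0 := by
    by_contra hno
    push_neg at hno
    have e1 : a₁ = 0 := by rcases mul_eq_zero.1 z1 with h|h; exact h; exact absurd h hno.1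
    have e2 : a₂ = 0 := by rcases mul_eq_zero.1 z2 with h|h; exact h; exact absurd h hno.2
    rw [e1, e2] at eqA0
    simp at eqA0
    linarith
  have sum0 : s₁ * (2*(u₁ 0 : ℝ) + (u₁ 1 : ℝ)) + s₂ * (2*(u₂ 0 : ℝ) + (u₂ 1 : ℝ)) = 0 := by
    linear_combination -2 * eqW0 - eqW1
  have m3 : 0 ≤ s₁ * (2*(u₁ 0 : ℝ) + (u₁ 1 : ℝ)) := mul_nonneg hs₁ hU1.2
  have m4 : 0 ≤ s₂ * (2*(u₂ 0 : ℝ) + (u₂ 1 : ℝ)) := mul_nonneg hs₂ hU2.2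
  have z3 : s₁ * (2*(u₁ 0 : ℝ) + (u₁ 1 : ℝ)) = 0 := by linarith
  have z4 : s₂ * (2*(u₂ 0 : ℝ) + (u₂ 1 : ℝ)) = 0 := by linarith
  have claim2 : 2*(u₁ 0 : ℝ) + (u₁ 1 : ℝ) = 0 ∨ 2*(u₂ 0 : ℝ) + (u₂ 1 : ℝ) = 0 := by
    by_contra hno
    push_neg at hno
    have e1 : s₁ = 0 := by rcases mul_eq_zero.1 z3 with h|h; exact h; exact absurd h hno.1
    have e2 : s₂ = 0 := by rcases mul_eq_zero.1 z4 with h|h; exact h; exact absurd h hno.2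
    rw [e1, e2] at eqW1
    simp at eqW1
    linarith
  -- move to integers and contradict unimodularity
  rcases claim1 with h1 | h1 <;> rcases claim2 with h2 | h2
  · -- u₁ 1 = 0 and 2 u₁ 0 + u₁ 1 = 0 : u₁ = 0
    have i1 : u₁ 1 = 0 := by exact_mod_cast h1
    have i0 : u₁ 0 = 0 := by
      have : 2*(u₁ 0 : ℝ) = 0 := by linarith
      have : (u₁ 0 : ℝ) = 0 := by linarith
      exact_mod_cast this
    rcases hdet with h|h <;> rw [i0, i1] at h <;> norm_num at h
  · -- u₁ 1 = 0 and 2 u₂ 0 + u₂ 1 = 0 : determinant even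
    have i1 : u₁ 1 = 0 := by exact_mod_cast h1
    have i2 : 2 * u₂ 0 + u₂ 1 = 0 := by exact_mod_cast h2
    have hdvd : (2:ℤ) ∣ (u₁ 0 * u₂ 1 - u₁ 1 * u₂ 0) := ⟨-(u₁ 0 * u₂ 0), by
      have : u₂ 1 = -2 * u₂ 0 := by linarith
      rw [this, i1]; ring⟩
    rcases hdet with h|h <;> rw [h] at hdvd <;> norm_num at hdvd
  · -- 2 u₁ 0 + u₁ 1 = 0 and u₂ 1 = 0 : determinant even
    have i1 : u₂ 1 = 0 := by exact_mod_cast h1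
    have i2 : 2 * u₁ 0 + u₁ 1 = 0 := by exact_mod_cast h2
    have hdvd : (2:ℤ) ∣ (u₁ 0 * u₂ 1 - u₁ 1 * u₂ 0) := ⟨u₁ 0 * u₂ 0, by
      have : u₁ 1 = -2 * u₁ 0 := by linarith
      rw [this, i1]; ring⟩
    rcases hdet with h|h <;> rw [h] at hdvd <;> norm_num at hdvd
  · -- u₂ 1 = 0 and 2 u₂ 0 + u₂ 1 = 0 : u₂ = 0
    have i1 : u₂ 1 = 0 := by exact_mod_cast h1
    have i0 : u₂ 0 = 0 := by
      have : 2*(u₂ 0 : ℝ) = 0 := by linarith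
      have : (u₂ 0 : ℝ) = 0 := by linarith
      exact_mod_cast this
    rcases hdet with h|h <;> rw [i0, i1] at h <;> norm_num at h

lemma poly_antitone {c b b' : ℝ} (h : b ≤ b') : poly c b' ⊆ poly c b := by
  rintro x ⟨h1, h2, h3, h4, h5, h6⟩
  exact ⟨h1, h2, h3, h4, h5, by linarith⟩

lemma poly_diff_subset {c b b' : ℝ} (hb : c/2 ≤ b) (hb' : b' ≤ c) :
    poly c b \ poly c b' ⊆ {x : Plane | x 0 ∈ Icc 0 c ∧ x 0 + x 1 ∈ Icc (c/2) b'} := by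
  rintro x ⟨⟨h1, h2, h3, h4, h5, h6⟩, hnot⟩
  have h7 : x 0 + x 1 < b' := by
    by_contra hge
    push_neg at hge
    exact hnot ⟨h1, h2, h3, h4, h5, hge⟩
  exact ⟨⟨h1, by linarith⟩, ⟨by linarith, h7.le⟩⟩

lemma sq_diff_subset {c b : ℝ} (hb1 : c/2 ≤ b) (hb2 : b ≤ c) :
    symmDiff (poly c b) unitSquare ⊆ {x : Plane | x 0 ∈ Icc 0 c ∧ x 0 + x 1 ∈ Icc 0 c} := by
  intro x hx
  rw [Set.mem_symmDiff] at hx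
  rcases hx with ⟨hp, hns⟩ | ⟨hs, hnp⟩
  · exact absurd ⟨hp.1, hp.2.1, hp.2.2.1, hp.2.2.2.1⟩ hns
  · obtain ⟨h1, h2, h3, h4⟩ := hs
    have h7 : x 0 + x 1 < c := by
      by_contra hge
      push_neg at hge
      exact hnp ⟨h1, h2, h3, h4, by linarith, by linarith⟩
    exact ⟨⟨h1, by linarith⟩, ⟨by linarith, h7.le⟩⟩

/-- The space of Delzant polygons with the symmetric-difference metric is not locally
compact: arbitrarily close to the unit square there are Cauchy sequences of Delzant
polygons without any subsequence converging to a Delzant polygon. -/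
theorem delzant_not_locallyCompact (ε : ℝ) (hε : 0 < ε) :
    ∃ Δseq : ℕ → Set Plane,
      (∀ n, IsDelzant (Δseq n)) ∧
      (∀ n, volume (symmDiff (Δseq n) unitSquare) ≤ ENNReal.ofReal ε) ∧
      (∀ δ : ℝ, 0 < δ → ∃ N : ℕ, ∀ m n : ℕ, N ≤ m → N ≤ n →
        volume (symmDiff (Δseq m) (Δseq n)) < ENNReal.ofReal δ) ∧
      ¬ ∃ (φ : ℕ → ℕ) (Δ : Set Plane), StrictMono φ ∧ IsDelzant Δ ∧
          Tendsto (fun k => volume (symmDiff (Δseq (φ k)) Δ)) atTop (nhds 0) := by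
  set c : ℝ := min ε 1 / 2 with hcdef
  have hc : 0 < c := by positivity
  have hc2 : c ≤ 1/2 := by
    rw [hcdef]; have := min_le_right ε 1; linarith
  have hcε : c ≤ ε/2 := by
    rw [hcdef]; have := min_le_left ε 1; linarith
  set B : ℕ → ℝ := fun n => c/2 + c/(4*((n:ℝ)+1)) with hBdef
  have hBgt : ∀ n, c/2 < B n := by
    intro n; rw [hBdef]; have : 0 < c/(4*((n:ℝ)+1)) := by positivity
    simp only []; linarith
  have hBle : ∀ n, B n ≤ 3*c/4 := by
    intro n
    have h1 : c/(4*((n:ℝ)+1)) ≤ c/4 := by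
      apply div_le_div_of_nonneg_left hc.le (by norm_num)
      have : (0:ℝ) ≤ (n:ℝ) := Nat.cast_nonneg n
      linarith
    simp only [hBdef]; linarith
  have hBanti : ∀ m n : ℕ, m ≤ n → B n ≤ B m := by
    intro m n hmn
    have h1 : c/(4*((n:ℝ)+1)) ≤ c/(4*((m:ℝ)+1)) := by
      apply div_le_div_of_nonneg_left hc.le (by positivity)
      have : (m:ℝ) ≤ (n:ℝ) := Nat.cast_le.2 hmn
      linarith
    simp only [hBdef]; linarith
  have hBc : ∀ n, B n ≤ c := fun n => (hBle n).trans (by linarith)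
  refine ⟨fun n => poly c (B n), ?_, ?_, ?_, ?_⟩
  · exact fun n => poly_isDelzant hc hc2 (hBgt n) (hBle n)
  · intro n
    calc volume (symmDiff (poly c (B n)) unitSquare)
        ≤ volume {x : Plane | x 0 ∈ Icc 0 c ∧ x 0 + x 1 ∈ Icc 0 c} :=
          measure_mono (sq_diff_subset (hBgt n).le (hBc n))
      _ ≤ ENNReal.ofReal c * ENNReal.ofReal (c - 0) := volume_strip_le c 0 c
      _ = ENNReal.ofReal (c * c) := by rw [sub_zero, ← ENNReal.ofReal_mul hc.le]
      _ ≤ ENNReal.ofReal ε := by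
          apply ENNReal.ofReal_le_ofReal; nlinarith
  · intro δ hδ
    obtain ⟨N, hN⟩ := exists_nat_gt (c*c/(4*δ))
    refine ⟨N, fun m n hm hn => ?_⟩
    have hsub : symmDiff (poly c (B m)) (poly c (B n)) ⊆
        {x : Plane | x 0 ∈ Icc 0 c ∧ x 0 + x 1 ∈ Icc (c/2) (B N)} := by
      intro x hx
      rw [Set.mem_symmDiff] at hx
      rcases hx with ⟨hp, hnp⟩ | ⟨hp, hnp⟩
      · have := poly_diff_subset (hBgt m).le (hBc n) ⟨hp, hnp⟩
        exact ⟨this.1, this.2.1, this.2.2.trans (hBanti N n hn)⟩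
      · have := poly_diff_subset (hBgt n).le (hBc m) ⟨hp, hnp⟩
        exact ⟨this.1, this.2.1, this.2.2.trans (hBanti N m hm)⟩
    calc volume (symmDiff (poly c (B m)) (poly c (B n)))
        ≤ volume {x : Plane | x 0 ∈ Icc 0 c ∧ x 0 + x 1 ∈ Icc (c/2) (B N)} := measure_mono hsub
      _ ≤ ENNReal.ofReal c * ENNReal.ofReal (B N - c/2) := volume_strip_le c (c/2) (B N)
      _ = ENNReal.ofReal (c * (c/(4*((N:ℝ)+1)))) := by
          rw [← ENNReal.ofReal_mul hc.le]
          congr 1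
          simp only [hBdef]; ring
      _ < ENNReal.ofReal δ := by
          apply (ENNReal.ofReal_lt_ofReal_iff hδ).2
          rw [div_lt_iff₀ (by positivity)] at hN
          have hN1 : (0:ℝ) ≤ (N:ℝ) := Nat.cast_nonneg N
          rw [← mul_div_assoc, div_lt_iff₀ (by positivity)]
          nlinarith
  · rintro ⟨φ, Δ, hφ, ⟨hcomp, hconv, hvol, hext⟩, hT⟩
    set L := poly c (c/2) with hL
    -- each P_{φ k} is close to L
    have hLP : ∀ k : ℕ, volume (symmDiff L (poly c (B (φ k)))) ≤
        ENNReal.ofReal (c * (c/(4*((k:ℝ)+1)))) := by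
      intro k
      have hsub : symmDiff L (poly c (B (φ k))) ⊆
          {x : Plane | x 0 ∈ Icc 0 c ∧ x 0 + x 1 ∈ Icc (c/2) (B (φ k))} := by
        intro x hx
        rw [Set.mem_symmDiff] at hx
        rcases hx with ⟨hp, hnp⟩ | ⟨hp, hnp⟩
        · exact poly_diff_subset le_rfl (hBc (φ k)) ⟨hp, hnp⟩
        · exact absurd (poly_antitone (hBgt (φ k)).le hp) hnp
      calc volume (symmDiff L (poly c (B (φ k))))
          ≤ volume {x : Plane | x 0 ∈ Icc 0 c ∧ x 0 + x 1 ∈ Icc (c/2) (B (φ k))} :=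
            measure_mono hsub
        _ ≤ ENNReal.ofReal c * ENNReal.ofReal (B (φ k) - c/2) := volume_strip_le _ _ _
        _ = ENNReal.ofReal (c * (c/(4*((φ k:ℝ)+1)))) := by
            rw [← ENNReal.ofReal_mul hc.le]; congr 1; simp only [hBdef]; ring
        _ ≤ ENNReal.ofReal (c * (c/(4*((k:ℝ)+1)))) := by
            apply ENNReal.ofReal_le_ofReal
            have hk : (k:ℝ) ≤ (φ k : ℝ) := Nat.cast_le.2 hφ.le_apply
            gcongr
    have hup : Tendsto (fun k : ℕ => ENNReal.ofReal (c * (c/(4*((k:ℝ)+1))))) atTop (nhds 0) := by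
      have hreal : Tendsto (fun k : ℕ => c * (c/(4*((k:ℝ)+1)))) atTop (nhds 0) := by
        have h0 : Tendsto (fun k : ℕ => (1:ℝ)/((k:ℝ)+1)) atTop (nhds 0) :=
          tendsto_one_div_add_atTop_nhds_zero_nat
        have h1 : Tendsto (fun k : ℕ => (c*c/4) * ((1:ℝ)/((k:ℝ)+1))) atTop (nhds 0) := by
          simpa using h0.const_mul (c*c/4)
        refine h1.congr fun k => ?_
        field_simp
      have := (ENNReal.continuous_ofReal.tendsto 0).comp hreal
      rw [ENNReal.ofReal_zero] at this; exact this
    have htendL : Tendsto (fun k : ℕ => volume (symmDiff L (poly c (B (φ k))))) atTop (nhds 0) := by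
      exact tendsto_of_tendsto_of_tendsto_of_le_of_le tendsto_const_nhds hup
        (fun k => zero_le) hLP
    have hsum : Tendsto (fun k : ℕ => volume (symmDiff L (poly c (B (φ k)))) +
        volume (symmDiff (poly c (B (φ k))) Δ)) atTop (nhds 0) := by
      have := htendL.add hT
      simpa using this
    have hL0 : volume (symmDiff L Δ) = 0 := by
      have hle : ∀ k : ℕ, volume (symmDiff L Δ) ≤ volume (symmDiff L (poly c (B (φ k)))) +
          volume (symmDiff (poly c (B (φ k))) Δ) := fun k => measure_symmDiff_le _ _ _
      have := ge_of_tendsto hsum (Eventually.of_forall hle)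
      exact le_zero_iff.1 this
    have hnull : volume (L \ Δ) = 0 ∧ volume (Δ \ L) = 0 := by
      rw [Set.symmDiff_def] at hL0
      exact measure_union_null_iff.1 hL0
    have hIntΔ : interior Δ ⊆ L := by
      have hopen : IsOpen (interior Δ \ L) := isOpen_interior.sdiff (poly_isClosed c (c/2))
      have hz : volume (interior Δ \ L) = 0 :=
        measure_mono_null (diff_subset_diff_left interior_subset) hnull.2
      have hempty : interior Δ \ L = ∅ := by
        by_contra hne
        rw [← Ne, ← nonempty_iff_ne_empty] at hne
        exact absurd hz (hopen.measure_pos volume hne).ne'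
      exact diff_eq_empty.1 hempty
    have hIntL : interior L ⊆ Δ := by
      have hopen : IsOpen (interior L \ Δ) := isOpen_interior.sdiff hcomp.isClosed
      have hz : volume (interior L \ Δ) = 0 :=
        measure_mono_null (diff_subset_diff_left interior_subset) hnull.1
      have hempty : interior L \ Δ = ∅ := by
        by_contra hne
        rw [← Ne, ← nonempty_iff_ne_empty] at hne
        exact absurd hz (hopen.measure_pos volume hne).ne'
      exact diff_eq_empty.1 hempty
    have hEq : Δ = L := by
      apply subset_antisymm
      · exact subset_of_interior_subset_closed hconv (poly_isClosed c (c/2))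
          (interior_nonempty_of_volume_pos hconv hvol) hIntΔ
      · exact subset_of_interior_subset_closed (poly_convex c (c/2)) hcomp.isClosed
          (interior_nonempty_of_volume_pos (poly_convex c (c/2))
            (poly_volume_pos c (c/2) hc hc2 (by linarith))) hIntL
    obtain ⟨u₁, u₂, hli, hdet, ε₀, hε₀, hcone⟩ :=
      hext (pt (c/2) 0) (by rw [hEq]; exact vertex_extreme hc hc2)
    rw [hEq] at hcone
    exact no_unimodular_cone hc hc2 hdet hε₀ hcone

end
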